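/- For every word w over the positive integers, the plane tree 𝒯(w) depends only on the packed word of w: 𝒯(w) = 𝒯(pack(w)). -/

import Mathlib

/-- A plane tree: a node carrying an ordered (possibly empty) list of subtrees.
A leaf is `node []`. -/
inductive PlaneTree where
  | node : List PlaneTree → PlaneTree

/-- Auxiliary, fuel-indexed version of the map `w ↦ 𝒯(w)` from words to plane trees.
If `w` is nonempty with greatest letter `m`, writing `w = v₀ m v₁ m ⋯ m v_k`
(splitting at the occurrences of `m`), the tree is obtained by grafting the trees of
`v₀, v₁, …, v_k` (in this order) on a common root; the empty word gives a leaf.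
The fuel argument (any value `≥ w.length` gives the correct answer, since each factor
`vᵢ` is strictly shorter than `w`) makes the recursion structural. -/
def treeOfAux : ℕ → List ℕ → PlaneTree
  | 0, _ => .node []
  | _ + 1, [] => .node []
  | n + 1, a :: l =>
      .node (((a :: l).splitOn ((a :: l).foldr max 0)).map (treeOfAux n))

/-- The plane tree `𝒯(w)` associated to a word `w` over the natural numbers:
`𝒯(ε)` is a leaf, and if `w` is nonempty with greatest letter `m` occurring exactly `k`
times, writing `w = v₀ m v₁ m ⋯ m v_k`, then `𝒯(w) = node [𝒯(v₀), 𝒯(v₁), …, 𝒯(v_k)]`. -/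
def treeOf (w : List ℕ) : PlaneTree := treeOfAux w.length w

/-- The rank of the letter `x` in the word `w`: one plus the number of distinct letters
of `w` smaller than `x`. -/
def rank (w : List ℕ) (x : ℕ) : ℕ := ((w.filter (· < x)).dedup).length + 1

/-- The packed word of a word `w`: if the distinct letters occurring in `w` are
`b₁ < b₂ < … < b_k`, each occurrence of `b_j` is replaced by `j`. -/
def pack (w : List ℕ) : List ℕ := w.map (rank w)

section Aux
open List

lemma splitOnP_mem {α : Type*} (p : α → Bool) :
    ∀ (l : List α) (v : List α), v ∈ l.splitOnP p → ∀ x ∈ v, x ∈ l := by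
  intro l
  induction l with
  | nil => intro v hv x hx; simp at hv; subst hv; simp at hx
  | cons a tl ih =>
    intro v hv x hx
    rw [splitOnP_cons] at hv
    by_cases h : p a
    · rw [if_pos h] at hv
      rcases mem_cons.mp hv with hv | hv
      · subst hv; simp at hx
      · exact mem_cons_of_mem _ (ih v hv x hx)
    · rw [if_neg h] at hv
      rcases hl : tl.splitOnP p with _ | ⟨hd, t⟩
      · exact absurd hl (splitOnP_ne_nil p tl)
      · rw [hl] at hv
        simp only [modifyHead] at hv
        rcases mem_cons.mp hv with hv | hv
        · subst hv
          rcases mem_cons.mp hx with hx | hx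
          · subst hx; exact mem_cons_self
          · exact mem_cons_of_mem _ (ih hd (hl ▸ mem_cons_self) x hx)
        · exact mem_cons_of_mem _ (ih v (hl ▸ mem_cons_of_mem _ hv) x hx)

lemma splitOnP_len_le {α : Type*} (p : α → Bool) :
    ∀ (l : List α) (v : List α), v ∈ l.splitOnP p → v.length ≤ l.length := by
  intro l
  induction l with
  | nil => intro v hv; simp at hv; simp [hv]
  | cons a tl ih =>
    intro v hv
    rw [splitOnP_cons] at hv
    by_cases h : p a
    · rw [if_pos h] at hv
      rcases mem_cons.mp hv with hv | hv
      · simp [hv]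
      · exact (ih v hv).trans (by simp)
    · rw [if_neg h] at hv
      rcases hl : tl.splitOnP p with _ | ⟨hd, t⟩
      · exact absurd hl (splitOnP_ne_nil p tl)
      · rw [hl] at hv
        simp only [modifyHead] at hv
        rcases mem_cons.mp hv with hv | hv
        · subst hv
          simpa using ih hd (hl ▸ mem_cons_self)
        · exact (ih v (hl ▸ mem_cons_of_mem _ hv)).trans (by simp)

lemma splitOnP_len_lt {α : Type*} (p : α → Bool) :
    ∀ (l : List α), (∃ a ∈ l, p a) → ∀ (v : List α), v ∈ l.splitOnP p → v.length < l.length := by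
  intro l
  induction l with
  | nil => rintro ⟨a, ha, -⟩; simp at ha
  | cons a tl ih =>
    rintro ⟨b, hb, hpb⟩ v hv
    rw [splitOnP_cons] at hv
    by_cases h : p a
    · rw [if_pos h] at hv
      rcases mem_cons.mp hv with hv | hv
      · simp [hv]
      · exact lt_of_le_of_lt (splitOnP_len_le p tl v hv) (by simp)
    · rw [if_neg h] at hv
      have hbtl : b ∈ tl := by
        rcases mem_cons.mp hb with hb | hb
        · exact absurd (hb ▸ hpb) h
        · exact hb
      rcases hl : tl.splitOnP p with _ | ⟨hd, t⟩
      · exact absurd hl (splitOnP_ne_nil p tl)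
      · rw [hl] at hv
        simp only [modifyHead] at hv
        rcases mem_cons.mp hv with hv | hv
        · subst hv
          simpa using ih ⟨b, hbtl, hpb⟩ hd (hl ▸ mem_cons_self)
        · exact lt_of_lt_of_le (ih ⟨b, hbtl, hpb⟩ v (hl ▸ mem_cons_of_mem _ hv)) (by simp)

lemma splitOnP_map {α β : Type*} (p : α → Bool) (q : β → Bool) (f : α → β) :
    ∀ (l : List α), (∀ x ∈ l, q (f x) = p x) →
      (l.map f).splitOnP q = (l.splitOnP p).map (List.map f) := by
  intro l
  induction l with
  | nil => simp
  | cons a tl ih =>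
    intro hq
    have hq' : ∀ x ∈ tl, q (f x) = p x := fun x hx => hq x (mem_cons_of_mem _ hx)
    simp only [map_cons, splitOnP_cons, hq a (mem_cons_self)]
    by_cases h : p a
    · simp [h, ih hq']
    · simp only [h, if_false, ih hq']
      rcases hl : tl.splitOnP p with _ | ⟨hd, t⟩
      · exact absurd hl (splitOnP_ne_nil p tl)
      · simp [modifyHead]

lemma foldr_max_mem : ∀ (l : List ℕ), l ≠ [] → l.foldr max 0 ∈ l := by
  intro l
  induction l with
  | nil => simp
  | cons a tl ih =>
    intro _
    rcases tl with _ | ⟨b, t⟩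
    · simp
    · rcases max_choice a ((b :: t).foldr max 0) with h | h <;>
        simp only [foldr_cons] at * <;> rw [h]
      · exact mem_cons_self
      · exact mem_cons_of_mem _ (ih (by simp))

lemma le_foldr_max : ∀ (l : List ℕ), ∀ x ∈ l, x ≤ l.foldr max 0 := by
  intro l
  induction l with
  | nil => simp
  | cons a tl ih =>
    intro x hx
    rcases mem_cons.mp hx with hx | hx
    · subst hx; exact le_max_left _ _
    · exact (ih x hx).trans (le_max_right _ _)

lemma foldr_max_map (f : ℕ → ℕ) (l : List ℕ) (hne : l ≠ [])
    (hmono : ∀ x ∈ l, ∀ y ∈ l, x ≤ y → f x ≤ f y) :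
    (l.map f).foldr max 0 = f (l.foldr max 0) := by
  have hm := foldr_max_mem l hne
  apply _root_.le_antisymm
  · have h2 := foldr_max_mem (l.map f) (by simpa using hne)
    rcases mem_map.mp h2 with ⟨x, hx, hfx⟩
    rw [← hfx]
    exact hmono x hx _ hm (le_foldr_max l x hx)
  · exact le_foldr_max (l.map f) _ (mem_map_of_mem hm)

lemma treeOfAux_map (f : ℕ → ℕ) :
    ∀ n (w : List ℕ), w.length ≤ n →
      (∀ x ∈ w, ∀ y ∈ w, x < y → f x < f y) →
      treeOfAux n w = treeOfAux n (w.map f) := by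
  intro n
  induction n with
  | zero => intro w _ _; rfl
  | succ n ih =>
    intro w hlen hmono
    rcases w with _ | ⟨a, l⟩
    · rfl
    · have hne : (a :: l) ≠ [] := by simp
      have hmono' : ∀ x ∈ a :: l, ∀ y ∈ a :: l, x ≤ y → f x ≤ f y := by
        intro x hx y hy hxy
        rcases lt_or_eq_of_le hxy with h | h
        · exact (hmono x hx y hy h).le
        · exact h ▸ le_rfl
      set m := (a :: l).foldr max 0 with hm
      have hmax : m ∈ a :: l := foldr_max_mem _ hne
      have hfmax : (f a :: l.map f).foldr max 0 = f m := by
        have := foldr_max_map f (a :: l) hne hmono'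
        exact this
      have hq : ∀ x ∈ a :: l, ((f x == f m) = (x == m)) := by
        intro x hx
        by_cases h : x = m
        · simp [h]
        · have hxm : x < m := lt_of_le_of_ne (le_foldr_max _ x hx) h
          have : f x ≠ f m := ne_of_lt (hmono x hx m hmax hxm)
          simp [h, this]
      show PlaneTree.node _ = PlaneTree.node _
      congr 1
      rw [hfmax]
      show ((a :: l).splitOnP (· == m)).map (treeOfAux n)
          = (((a :: l).map f).splitOnP (· == f m)).map (treeOfAux n)
      rw [splitOnP_map (· == m) (· == f m) f (a :: l) hq, List.map_map]
      apply List.map_congr_left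
      intro v hv
      have hvlen : v.length < (a :: l).length :=
        splitOnP_len_lt (· == m) (a :: l) ⟨m, hmax, by simp⟩ v hv
      have hvlen' : v.length ≤ n := by
        simp only [length_cons] at hvlen hlen
        omega
      have hvmono : ∀ x ∈ v, ∀ y ∈ v, x < y → f x < f y := by
        intro x hx y hy hxy
        exact hmono x (splitOnP_mem _ _ v hv x hx) y (splitOnP_mem _ _ v hv y hy) hxy
      exact ih v hvlen' hvmono

lemma rank_strictMono (w : List ℕ) {x y : ℕ} (hx : x ∈ w) (hxy : x < y) :
    rank w x < rank w y := by
  unfold rank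
  have h1 : (w.filter (· < x)).toFinset ⊂ (w.filter (· < y)).toFinset := by
    constructor
    · intro a ha
      simp only [List.mem_toFinset, List.mem_filter, decide_eq_true_eq] at *
      exact ⟨ha.1, ha.2.trans hxy⟩
    · intro hsub
      have hxmem : x ∈ (w.filter (· < y)).toFinset := by
        simp only [List.mem_toFinset, List.mem_filter, decide_eq_true_eq]
        exact ⟨hx, hxy⟩
      have := hsub hxmem
      simp only [List.mem_toFinset, List.mem_filter, decide_eq_true_eq] at this
      exact lt_irrefl x this.2
  have h2 := Finset.card_lt_card h1
  rw [List.card_toFinset, List.card_toFinset] at h2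
  omega

end Aux

/-- The plane tree `𝒯(w)` of a word `w` over the positive integers depends only on the
packed word of `w`: `𝒯(w) = 𝒯(pack w)`. -/
theorem treeOf_pack (w : List ℕ) (hw : ∀ x ∈ w, 0 < x) :
    treeOf w = treeOf (pack w) := by
  have hlen : (pack w).length = w.length := by simp [pack]
  unfold treeOf
  rw [hlen]
  exact treeOfAux_map (rank w) w.length w le_rfl (fun x hx y _ h => rank_strictMono w hx h)
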